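/- Fix hypertoric data in a standard p-frame: integers k, d ≥ 1 with n = k + d, a subset p ⊆ {1,…,n} of size d with complement A partitioned as A = A⁺ ⊔ A⁻ (|A| = k), and an integer matrix C = (C_{ij})_{i∈p, j∈A}. Let F := ℚ(t, h, α_1,…,α_d) be a rational function field, set q := t², ħ := h², and define x_j := 1 for j ∈ A⁺, x_j := ħ^{−1} for j ∈ A⁻, and x_i := α_i · h^{−2 Σ_{j∈A⁻} C_{ij}} for i ∈ p. For D ∈ ℤ let (y; q)_D := ∏_{l=0}^{D−1}(1 − q^l y) if D ≥ 0 and ∏_{l=1}^{−D}(1 − q^{−l} y)^{−1} if D < 0, and {y}_D := (−t h^{−1})^D (ħ y; q)_D / (q y; q)_D. For m ∈ ℕ^A set d_j := m_j for j ∈ A⁺, d_j := −m_j for j ∈ A⁻, and D_i := Σ_{j∈A} C_{ij} d_j for i ∈ p, and define the bare vertex series V := Σ_{m∈ℕ^A} t^{−(Σ_{j∈A} d_j + Σ_{i∈p} D_i)} ∏_{j∈A⁺} {1}_{d_j} ∏_{j∈A⁻} {ħ^{−1}}_{d_j} ∏_{i∈p} {x_i}_{D_i} · ζ^m in the formal power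 series ring F[[ζ_j : j ∈ A]]. For i ∈ {1,…,n} let 𝒵_i be the F-linear operator on F[[ζ]] that multiplies the coefficient of ζ^m by x_i q^{D_i(m)}, where D_i(m) := d_i for i ∈ A and D_i(m) := Σ_{j∈A} C_{ij} d_j for i ∈ p. Let S = S⁺ ⊔ S⁻ ⊆ {1,…,n} and v ∈ ℤ^n be a circuit relation vector: v_i = 1 for i ∈ S⁺, v_i = −1 for i ∈ S⁻, v_i = 0 for i ∉ S, satisfying v_i = Σ_{j∈A} C_{ij} v_j for all i ∈ p, and the effectivity condition v_j ≥ 0 for j ∈ A⁺ and v_j ≤ 0 for j ∈ A⁻. Then ∏_{i∈S⁺}(1 − 𝒵_i) ∏_{i∈S⁻}(1 − ħ𝒵_i) V = (−h^{−1})^{|S⁺| − |S⁻|} · ζ^{|v_A|} · ∏_{i∈S⁺}(1 − ħ𝒵_i) ∏_{i∈S⁻}(1 − 𝒵_i) V, where ζ^{|v_A|} := ∏_{j∈A} ζ_j^{|v_j|} acts by multiplication. -/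

import Mathlib

open Finset

noncomputable section

/-- the base field `F = ℚ(t, h, α₁, …, αₙ)` (the variables `αᵢ` with `i ∈ p` are the
non-redundant equivariant parameters; only those are used below). -/
abbrev FF (n : ℕ) := FractionRing (MvPolynomial (Fin 2 ⊕ Fin n) ℚ)

def tVar (n : ℕ) : FF n :=
  algebraMap (MvPolynomial (Fin 2 ⊕ Fin n) ℚ) (FF n) (MvPolynomial.X (Sum.inl 0))

def hVar (n : ℕ) : FF n :=
  algebraMap (MvPolynomial (Fin 2 ⊕ Fin n) ℚ) (FF n) (MvPolynomial.X (Sum.inl 1))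

def aVar (n : ℕ) (i : Fin n) : FF n :=
  algebraMap (MvPolynomial (Fin 2 ⊕ Fin n) ℚ) (FF n) (MvPolynomial.X (Sum.inr i))

/-- `q := t²`. -/
def qF (n : ℕ) : FF n := tVar n ^ 2

/-- `ħ := h²`. -/
def hbarF (n : ℕ) : FF n := hVar n ^ 2

/-- the q-Pochhammer symbol `(y; q)_D` for `D ∈ ℤ`. -/
def qPochZ {K : Type*} [Field K] (q y : K) : ℤ → K
  | Int.ofNat D => ∏ l ∈ Finset.range D, (1 - q ^ l * y)
  | Int.negSucc m => (∏ l ∈ Finset.range (m + 1), (1 - q ^ (-(l : ℤ) - 1) * y))⁻¹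

/-- `{y}_D := s^D (ħy;q)_D/(qy;q)_D`, where `s = -t h⁻¹ = -q^{1/2}ħ^{-1/2}`. -/
def braceF {K : Type*} [Field K] (q hbar s y : K) (D : ℤ) : K :=
  s ^ D * qPochZ q (hbar * y) D / qPochZ q (q * y) D

/-- the fixed-point restrictions `xᵢ`: `1` on `A⁺`, `ħ⁻¹` on `A⁻`, and
`αᵢ h^{-2 Σ_{j∈A⁻} C_{ij}}` on `p`. -/
def xResF (n : ℕ) (Aplus Aminus : Finset (Fin n)) (C : Fin n → Fin n → ℤ) (i : Fin n) :
    FF n :=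
  if i ∈ Aplus then 1
  else if i ∈ Aminus then (hbarF n)⁻¹
  else aVar n i * hVar n ^ (-2 * ∑ j ∈ Aminus, C i j)

/-- extension by zero of a degree vector `m ∈ ℕ^A` to all of `{1,…,n}`. -/
def mExt (n : ℕ) (p : Finset (Fin n)) (m : {j : Fin n // j ∈ pᶜ} →₀ ℕ) (j : Fin n) : ℕ :=
  if h : j ∈ pᶜ then m ⟨j, h⟩ else 0

/-- `dⱼ := mⱼ` for `j ∈ A⁺` and `dⱼ := -mⱼ` for `j ∈ A⁻`. -/
def dDeg (n : ℕ) (p Aplus : Finset (Fin n)) (m : {j : Fin n // j ∈ pᶜ} →₀ ℕ)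
    (j : Fin n) : ℤ :=
  if j ∈ Aplus then (mExt n p m j : ℤ) else -(mExt n p m j : ℤ)

/-- `Dᵢ(m) := dᵢ` for `i ∈ A` and `Dᵢ(m) := Σ_{j∈A} C_{ij} dⱼ` for `i ∈ p`. -/
def DDeg (n : ℕ) (p Aplus : Finset (Fin n)) (C : Fin n → Fin n → ℤ)
    (m : {j : Fin n // j ∈ pᶜ} →₀ ℕ) (i : Fin n) : ℤ :=
  if i ∈ pᶜ then dDeg n p Aplus m i
  else ∑ j ∈ pᶜ, C i j * dDeg n p Aplus m j

/-- the coefficient of `ζ^m` in the bare vertex series `V`. -/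
def Vcoeff (n : ℕ) (p Aplus Aminus : Finset (Fin n)) (C : Fin n → Fin n → ℤ)
    (m : {j : Fin n // j ∈ pᶜ} →₀ ℕ) : FF n :=
  tVar n ^ (-((∑ j ∈ pᶜ, dDeg n p Aplus m j) + ∑ i ∈ p, DDeg n p Aplus C m i))
    * (∏ j ∈ Aplus,
        braceF (qF n) (hbarF n) (-(tVar n * (hVar n)⁻¹)) 1 (dDeg n p Aplus m j))
    * (∏ j ∈ Aminus,
        braceF (qF n) (hbarF n) (-(tVar n * (hVar n)⁻¹)) ((hbarF n)⁻¹) (dDeg n p Aplus m j))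
    * ∏ i ∈ p,
        braceF (qF n) (hbarF n) (-(tVar n * (hVar n)⁻¹)) (xResF n Aplus Aminus C i)
          (DDeg n p Aplus C m i)

/-! ### Auxiliary lemmas -/

lemma tVar_ne_zero (n : ℕ) : tVar n ≠ 0 := by
  rw [tVar, Ne, IsFractionRing.to_map_eq_zero_iff]
  exact MvPolynomial.X_ne_zero _

lemma hVar_ne_zero (n : ℕ) : hVar n ≠ 0 := by
  rw [hVar, Ne, IsFractionRing.to_map_eq_zero_iff]
  exact MvPolynomial.X_ne_zero _

lemma mono_inj (n : ℕ) (i : Fin n) (a b c a' b' c' : ℕ)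
    (h : tVar n ^ a * hVar n ^ b * aVar n i ^ c
       = tVar n ^ a' * hVar n ^ b' * aVar n i ^ c') :
    a = a' ∧ b = b' ∧ c = c' := by
  have hinj : Function.Injective (algebraMap (MvPolynomial (Fin 2 ⊕ Fin n) ℚ) (FF n)) :=
    IsFractionRing.injective _ _
  rw [tVar, hVar, aVar] at h
  simp only [← map_pow, ← map_mul] at h
  have h2 := hinj h
  rw [MvPolynomial.X_pow_eq_monomial, MvPolynomial.X_pow_eq_monomial,
    MvPolynomial.X_pow_eq_monomial, MvPolynomial.X_pow_eq_monomial,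
    MvPolynomial.X_pow_eq_monomial, MvPolynomial.X_pow_eq_monomial,
    MvPolynomial.monomial_mul, MvPolynomial.monomial_mul,
    MvPolynomial.monomial_mul, MvPolynomial.monomial_mul,
    MvPolynomial.monomial_eq_monomial_iff] at h2
  rcases h2 with ⟨h3, -⟩ | ⟨h3, -⟩
  · have e0 := DFunLike.congr_fun h3 (Sum.inl 0)
    have e1 := DFunLike.congr_fun h3 (Sum.inl 1)
    have e2 := DFunLike.congr_fun h3 (Sum.inr i)
    simp [Finsupp.single_apply, Fin.ext_iff] at e0 e1 e2
    exact ⟨e0, e1, e2⟩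
  · simp at h3

lemma mono_zpow_ne_one (n : ℕ) (i : Fin n) (a b : ℤ) (c : ℕ)
    (hne : ¬(a = 0 ∧ b = 0 ∧ c = 0)) :
    tVar n ^ a * hVar n ^ b * aVar n i ^ c ≠ 1 := by
  intro h
  have ht := tVar_ne_zero n
  have hh := hVar_ne_zero n
  have h3 : tVar n ^ ((a.toNat:ℤ)) * hVar n ^ ((b.toNat:ℤ)) * aVar n i ^ c
      = tVar n ^ (((-a).toNat:ℤ)) * hVar n ^ (((-b).toNat:ℤ)) := by
    rw [show ((a.toNat:ℤ)) = a + ((-a).toNat:ℤ) by omega,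
      show ((b.toNat:ℤ)) = b + ((-b).toNat:ℤ) by omega,
      zpow_add₀ ht, zpow_add₀ hh]
    calc tVar n ^ a * tVar n ^ (((-a).toNat:ℤ)) * (hVar n ^ b * hVar n ^ (((-b).toNat:ℤ)))
          * aVar n i ^ c
        = (tVar n ^ a * hVar n ^ b * aVar n i ^ c)
          * (tVar n ^ (((-a).toNat:ℤ)) * hVar n ^ (((-b).toNat:ℤ))) := by ring
      _ = tVar n ^ (((-a).toNat:ℤ)) * hVar n ^ (((-b).toNat:ℤ)) := by rw [h, one_mul]
  rw [zpow_natCast, zpow_natCast, zpow_natCast, zpow_natCast] at h3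
  rw [show tVar n ^ (-a).toNat * hVar n ^ (-b).toNat
      = tVar n ^ (-a).toNat * hVar n ^ (-b).toNat * aVar n i ^ 0 by rw [pow_zero, mul_one]] at h3
  obtain ⟨e1, e2, e3⟩ := mono_inj n i _ _ _ _ _ _ h3
  exact hne ⟨by omega, by omega, e3⟩

lemma one_sub_mono_ne (n : ℕ) (i : Fin n) (a b : ℤ) (c : ℕ)
    (h : ¬(a = 0 ∧ b = 0 ∧ c = 0)) :
    (1:FF n) - tVar n ^ a * hVar n ^ b * aVar n i ^ c ≠ 0 :=
  fun h0 => mono_zpow_ne_one n i a b c h (sub_eq_zero.mp h0).symm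

lemma qF_zpow (n : ℕ) (e : ℤ) : qF n ^ e = tVar n ^ (2*e) := by
  rw [qF, ← zpow_natCast (tVar n) 2, ← zpow_mul]; norm_num
lemma hbarF_inv (n : ℕ) : (hbarF n)⁻¹ = hVar n ^ (-2:ℤ) := by
  rw [hbarF, ← zpow_natCast (hVar n) 2, ← zpow_neg]; norm_num
lemma hbarF_zpow (n : ℕ) : hbarF n = hVar n ^ (2:ℤ) := by
  rw [hbarF, ← zpow_natCast (hVar n) 2]; norm_num
lemma qF_ne_zero (n : ℕ) : qF n ≠ 0 := pow_ne_zero _ (tVar_ne_zero n)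
lemma hbarF_ne_zero (n : ℕ) : hbarF n ≠ 0 := pow_ne_zero _ (hVar_ne_zero n)
lemma sF_ne_zero (n : ℕ) : -(tVar n * (hVar n)⁻¹) ≠ 0 := by
  simp [tVar_ne_zero n, hVar_ne_zero n]

lemma ns1 (n : ℕ) (i : Fin n) (e : ℤ) (he : e ≠ 0) : (1:FF n) - qF n ^ e * 1 ≠ 0 := by
  have : qF n ^ e * 1 = tVar n ^ (2*e) * hVar n ^ (0:ℤ) * aVar n i ^ 0 := by
    rw [qF_zpow]; simp
  rw [this]; exact one_sub_mono_ne n i _ _ _ (by omega)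

lemma ns2 (n : ℕ) (i : Fin n) (e : ℤ) : (1:FF n) - qF n ^ e * (hbarF n)⁻¹ ≠ 0 := by
  have : qF n ^ e * (hbarF n)⁻¹ = tVar n ^ (2*e) * hVar n ^ (-2:ℤ) * aVar n i ^ 0 := by
    rw [qF_zpow, hbarF_inv]; simp
  rw [this]; exact one_sub_mono_ne n i _ _ _ (by omega)

lemma ns3 (n : ℕ) (i : Fin n) (e E : ℤ) :
    (1:FF n) - qF n ^ e * (aVar n i * hVar n ^ E) ≠ 0 := by
  have : qF n ^ e * (aVar n i * hVar n ^ E) = tVar n ^ (2*e) * hVar n ^ E * aVar n i ^ 1 := by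
    rw [qF_zpow]; ring
  rw [this]; exact one_sub_mono_ne n i _ _ _ (by omega)

lemma ns4 (n : ℕ) (i : Fin n) (e E : ℤ) :
    (1:FF n) - qF n ^ e * (hbarF n * (aVar n i * hVar n ^ E)) ≠ 0 := by
  have : qF n ^ e * (hbarF n * (aVar n i * hVar n ^ E))
      = tVar n ^ (2*e) * hVar n ^ (E+2) * aVar n i ^ 1 := by
    rw [qF_zpow, hbarF_zpow, zpow_add₀ (hVar_ne_zero n)]; ring
  rw [this]; exact one_sub_mono_ne n i _ _ _ (by omega)

lemma ns5 (n : ℕ) (i : Fin n) (e : ℤ) (he : e ≠ 0) :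
    (1:FF n) - qF n ^ e * (hbarF n * (hbarF n)⁻¹) ≠ 0 := by
  rw [mul_inv_cancel₀ (hbarF_ne_zero n)]
  exact ns1 n i e he

lemma qPochZ_add_one {K : Type*} [Field K] (q y : K) (D : ℤ)
    (h : D < 0 → 1 - q ^ D * y ≠ 0) :
    qPochZ q y (D + 1) = qPochZ q y D * (1 - q ^ D * y) := by
  match D with
  | Int.ofNat D' =>
    have e : (Int.ofNat D') + 1 = Int.ofNat (D' + 1) := rfl
    rw [e]
    show (∏ l ∈ Finset.range (D'+1), (1 - q ^ l * y))
        = (∏ l ∈ Finset.range D', (1 - q ^ l * y)) * _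
    rw [Finset.prod_range_succ]
    congr 2
    rw [← zpow_natCast q D']
    rfl
  | Int.negSucc 0 =>
    have hc : (1:K) - q ^ (Int.negSucc 0) * y ≠ 0 := h (Int.negSucc_lt_zero 0)
    have e : (Int.negSucc 0) + 1 = (Int.ofNat 0) := by decide
    rw [e]
    show (∏ l ∈ Finset.range 0, (1 - q ^ (l:ℕ) * y))
        = (∏ l ∈ Finset.range 1, (1 - q ^ (-(l:ℤ) - 1) * y))⁻¹ * (1 - q ^ (Int.negSucc 0) * y)
    rw [Finset.prod_range_zero, Finset.prod_range_one]
    have e2 : (-(↑(0:ℕ):ℤ) - 1) = Int.negSucc 0 := by decide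
    rw [e2, inv_mul_cancel₀ hc]
  | Int.negSucc (m+1) =>
    have hc : (1:K) - q ^ (Int.negSucc (m+1)) * y ≠ 0 := h (Int.negSucc_lt_zero _)
    have e : (Int.negSucc (m+1)) + 1 = Int.negSucc m := by
      rw [Int.negSucc_eq, Int.negSucc_eq]; push_cast; ring
    rw [e]
    show (∏ l ∈ Finset.range (m+1), (1 - q ^ (-(l:ℤ) - 1) * y))⁻¹
       = (∏ l ∈ Finset.range (m+2), (1 - q ^ (-(l:ℤ) - 1) * y))⁻¹
          * (1 - q ^ (Int.negSucc (m+1)) * y)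
    have e2 : (-(↑(m+1:ℕ):ℤ) - 1) = Int.negSucc (m+1) := by
      rw [Int.negSucc_eq]; push_cast; ring
    conv_rhs => rw [Finset.prod_range_succ, e2, mul_inv]
    rw [mul_assoc, inv_mul_cancel₀ hc, mul_one]

lemma braceF_step {K : Type*} [Field K] (q hbar s y : K) (D : ℤ)
    (hs : s ≠ 0) (hq : q ≠ 0)
    (h1 : 1 - q ^ (D + 1) * y ≠ 0)
    (h2 : D < 0 → 1 - q ^ D * (hbar * y) ≠ 0) :
    (1 - q ^ (D + 1) * y) * braceF q hbar s y (D + 1)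
      = s * ((1 - hbar * (q ^ D * y)) * braceF q hbar s y D) := by
  have key : q ^ D * (q * y) = q ^ (D+1) * y := by
    rw [zpow_add_one₀ hq]; ring
  have e1 : qPochZ q (hbar*y) (D+1) = qPochZ q (hbar*y) D * (1 - q ^ D * (hbar*y)) :=
    qPochZ_add_one _ _ _ h2
  have e2 : qPochZ q (q*y) (D+1) = qPochZ q (q*y) D * (1 - q ^ (D+1) * y) := by
    rw [qPochZ_add_one q (q*y) D (fun _ => by rw [key]; exact h1), key]
  rw [braceF, braceF, e1, e2]
  set N := qPochZ q (hbar*y) D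
  set P := qPochZ q (q*y) D
  set c := 1 - q ^ (D+1) * y
  rw [mul_comm P c, ← div_div, ← mul_div_assoc, mul_comm c _, div_mul_cancel₀ _ h1,
    zpow_add_one₀ hs, div_eq_mul_inv, div_eq_mul_inv]
  ring

lemma step_plus (n : ℕ) (x : FF n) (D : ℤ)
    (h1 : (1:FF n) - qF n ^ (D + 1) * x ≠ 0)
    (h2 : D < 0 → (1:FF n) - qF n ^ D * (hbarF n * x) ≠ 0) :
    (1 - 1 * (x * qF n ^ (D + 1)))
        * braceF (qF n) (hbarF n) (-(tVar n * (hVar n)⁻¹)) x (D + 1)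
      = (tVar n * -(hVar n)⁻¹)
        * (1 - hbarF n * (x * qF n ^ D))
        * braceF (qF n) (hbarF n) (-(tVar n * (hVar n)⁻¹)) x D := by
  have := braceF_step (qF n) (hbarF n) (-(tVar n * (hVar n)⁻¹)) x D (sF_ne_zero n)
    (qF_ne_zero n) h1 h2
  calc (1 - 1 * (x * qF n ^ (D + 1)))
        * braceF (qF n) (hbarF n) (-(tVar n * (hVar n)⁻¹)) x (D + 1)
      = (1 - qF n ^ (D + 1) * x)
        * braceF (qF n) (hbarF n) (-(tVar n * (hVar n)⁻¹)) x (D + 1) := by ring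
    _ = -(tVar n * (hVar n)⁻¹) * ((1 - hbarF n * (qF n ^ D * x))
        * braceF (qF n) (hbarF n) (-(tVar n * (hVar n)⁻¹)) x D) := this
    _ = _ := by ring

lemma step_minus (n : ℕ) (x : FF n) (D : ℤ)
    (h1 : (1:FF n) - qF n ^ D * x ≠ 0)
    (h2 : D - 1 < 0 → (1:FF n) - qF n ^ (D - 1) * (hbarF n * x) ≠ 0) :
    (1 - hbarF n * (x * qF n ^ (D - 1)))
        * braceF (qF n) (hbarF n) (-(tVar n * (hVar n)⁻¹)) x (D - 1)
      = (tVar n * -(hVar n)⁻¹)⁻¹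
        * (1 - 1 * (x * qF n ^ D))
        * braceF (qF n) (hbarF n) (-(tVar n * (hVar n)⁻¹)) x D := by
  have hs := sF_ne_zero n
  have key := braceF_step (qF n) (hbarF n) (-(tVar n * (hVar n)⁻¹)) x (D - 1) hs
    (qF_ne_zero n) (by rw [show D - 1 + 1 = D by ring]; exact h1) h2
  rw [show D - 1 + 1 = D by ring] at key
  rw [show (tVar n * -(hVar n)⁻¹)⁻¹ = (-(tVar n * (hVar n)⁻¹))⁻¹ by ring_nf]
  rw [mul_assoc, eq_inv_mul_iff_mul_eq₀ hs]
  calc (-(tVar n * (hVar n)⁻¹)) * ((1 - hbarF n * (x * qF n ^ (D - 1)))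
        * braceF (qF n) (hbarF n) (-(tVar n * (hVar n)⁻¹)) x (D - 1))
      = (-(tVar n * (hVar n)⁻¹)) * ((1 - hbarF n * (qF n ^ (D-1) * x))
        * braceF (qF n) (hbarF n) (-(tVar n * (hVar n)⁻¹)) x (D - 1)) := by ring
    _ = (1 - qF n ^ D * x) * braceF (qF n) (hbarF n) (-(tVar n * (hVar n)⁻¹)) x D := key.symm
    _ = _ := by ring

lemma scalar_id {K : Type*} [Field K] (t h : K) (ht : t ≠ 0) (hh : h ≠ 0) (a b : ℕ) (E : ℤ) :
    t^(-(E + ((a:ℤ) - b))) * (t * -h⁻¹)^a * ((t * -h⁻¹)⁻¹)^b = (-h⁻¹)^((a:ℤ)-(b:ℤ)) * t^(-E) := by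
  have hu : (-h⁻¹ : K) ≠ 0 := by simp [hh]
  rw [show ((t * -h⁻¹)^a) = (t*-h⁻¹)^(a:ℤ) from (zpow_natCast _ a).symm,
    show (((t * -h⁻¹)⁻¹)^b) = (t*-h⁻¹)^(-(b:ℤ)) by rw [← zpow_natCast _ b, inv_zpow, ← zpow_neg],
    mul_zpow, mul_zpow]
  calc t ^ (-(E + ((a:ℤ) - b))) * (t ^ (a:ℤ) * (-h⁻¹) ^ (a:ℤ)) * (t ^ (-(b:ℤ)) * (-h⁻¹) ^ (-(b:ℤ)))
      = t ^ (-(E + ((a:ℤ) - b)) + ((a:ℤ) + -(b:ℤ))) * (-h⁻¹) ^ ((a:ℤ) + -(b:ℤ)) := by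
        rw [zpow_add₀ ht, zpow_add₀ ht, zpow_add₀ hu]; ring
    _ = (-h⁻¹)^((a:ℤ)-(b:ℤ)) * t^(-E) := by
        rw [show -(E+((a:ℤ)-b)) + ((a:ℤ) + -(b:ℤ)) = -E by ring,
          show (a:ℤ) + -(b:ℤ) = (a:ℤ)-b by ring]; ring

/-- the q-difference equation in the Kähler parameters satisfied by the
bare vertex function of a hypertoric variety, restricted to a fixed point `p`. -/
theorem stmt_11 (n k d : ℕ) (hk : 1 ≤ k) (hd : 1 ≤ d) (hn : n = k + d)
    (p : Finset (Fin n)) (hp : p.card = d)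
    (Aplus Aminus : Finset (Fin n)) (hA : Aplus ∪ Aminus = pᶜ)
    (hAdisj : Disjoint Aplus Aminus) (hAcard : (Aplus ∪ Aminus).card = k)
    (C : Fin n → Fin n → ℤ)
    -- the bare vertex series, characterized by its coefficients
    (V : MvPowerSeries {j : Fin n // j ∈ pᶜ} (FF n))
    (hV : ∀ m, MvPowerSeries.coeff (R := FF n) m V = Vcoeff n p Aplus Aminus C m)
    -- the operators 𝒵ᵢ, characterized by: the coefficient of ζ^m is multiplied by xᵢ q^{Dᵢ(m)}
    (Zop : Fin n → MvPowerSeries {j : Fin n // j ∈ pᶜ} (FF n) →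
      MvPowerSeries {j : Fin n // j ∈ pᶜ} (FF n))
    (hZop : ∀ (i : Fin n) (f : MvPowerSeries {j : Fin n // j ∈ pᶜ} (FF n)) (m),
      MvPowerSeries.coeff (R := FF n) m (Zop i f)
        = xResF n Aplus Aminus C i * qF n ^ (DDeg n p Aplus C m i)
          * MvPowerSeries.coeff (R := FF n) m f)
    -- the circuit `S = S⁺ ⊔ S⁻` with relation vector `v`
    (Splus Sminus : Finset (Fin n)) (hS : Disjoint Splus Sminus)
    (v : Fin n → ℤ)
    (hv1 : ∀ i ∈ Splus, v i = 1) (hv2 : ∀ i ∈ Sminus, v i = -1)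
    (hv0 : ∀ i, i ∉ Splus ∪ Sminus → v i = 0)
    (hrel : ∀ i ∈ p, v i = ∑ j ∈ pᶜ, C i j * v j)
    (heff1 : ∀ j ∈ Aplus, 0 ≤ v j) (heff2 : ∀ j ∈ Aminus, v j ≤ 0) :
    Splus.toList.foldr (fun i g => g - Zop i g)
        (Sminus.toList.foldr (fun i g => g - hbarF n • Zop i g) V)
      = (-(hVar n)⁻¹) ^ ((Splus.card : ℤ) - (Sminus.card : ℤ)) •
          (MvPowerSeries.monomial (R := FF n)
              (Finsupp.equivFunOnFinite.symm fun j : {j : Fin n // j ∈ pᶜ} =>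
                (v (j : Fin n)).natAbs) 1
            * Splus.toList.foldr (fun i g => g - hbarF n • Zop i g)
                (Sminus.toList.foldr (fun i g => g - Zop i g) V)) := by
  classical
  have ht := tVar_ne_zero n
  have hh := hVar_ne_zero n
  have hbne := hbarF_ne_zero n
  have hApos : Aplus ⊆ pᶜ := by rw [← hA]; exact Finset.subset_union_left
  have hAneg : Aminus ⊆ pᶜ := by rw [← hA]; exact Finset.subset_union_right
  have hvplus : ∀ j, j ∈ Splus → j ∈ pᶜ → j ∈ Aplus := by
    intro j hj hjc
    have hjc' : j ∈ Aplus ∪ Aminus := by rw [hA]; exact hjc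
    rcases Finset.mem_union.mp hjc' with h' | h'
    · exact h'
    · exfalso; have := heff2 j h'; rw [hv1 j hj] at this; omega
  have hvminus : ∀ j, j ∈ Sminus → j ∈ pᶜ → j ∈ Aminus := by
    intro j hj hjc
    have hjc' : j ∈ Aplus ∪ Aminus := by rw [hA]; exact hjc
    rcases Finset.mem_union.mp hjc' with h' | h'
    · exfalso; have := heff1 j h'; rw [hv2 j hj] at this; omega
    · exact h'
  have hv3 : ∀ i : Fin n, v i = 1 ∨ v i = -1 ∨ v i = 0 := by
    intro i
    by_cases h1 : i ∈ Splus
    · exact Or.inl (hv1 i h1)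
    · by_cases h2 : i ∈ Sminus
      · exact Or.inr (Or.inl (hv2 i h2))
      · exact Or.inr (Or.inr (hv0 i (by simp [h1, h2])))
  have coeff_foldr : ∀ (u : FF n) (L : List (Fin n))
      (f : MvPowerSeries {j : Fin n // j ∈ pᶜ} (FF n)) (m),
      MvPowerSeries.coeff (R := FF n) m (L.foldr (fun i g => g - u • Zop i g) f)
        = (L.map (fun i => 1 - u * (xResF n Aplus Aminus C i
              * qF n ^ (DDeg n p Aplus C m i)))).prod
          * MvPowerSeries.coeff (R := FF n) m f := by
    intro u L f m
    induction L with
    | nil => simp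
    | cons i L ih =>
      rw [List.foldr_cons, map_sub, MvPowerSeries.coeff_smul, hZop, ih, List.map_cons,
        List.prod_cons]
      ring
  have fold_one : (fun (i : Fin n) (g : MvPowerSeries {j : Fin n // j ∈ pᶜ} (FF n)) =>
      g - Zop i g) = fun i g => g - (1 : FF n) • Zop i g := by
    funext i g; rw [one_smul]
  ext m
  rw [fold_one, MvPowerSeries.coeff_smul, MvPowerSeries.coeff_monomial_mul,
    coeff_foldr, coeff_foldr, coeff_foldr, coeff_foldr, hV,
    Finset.prod_map_toList, Finset.prod_map_toList]
  set ν : {j : Fin n // j ∈ pᶜ} →₀ ℕ :=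
    Finsupp.equivFunOnFinite.symm fun j : {j : Fin n // j ∈ pᶜ} => (v (j : Fin n)).natAbs
    with hνdef
  have hνap : ∀ j : {j : Fin n // j ∈ pᶜ}, ν j = (v (j : Fin n)).natAbs := by
    intro j; rw [hνdef]; simp
  by_cases hle : ν ≤ m
  · -- main case
    rw [if_pos hle, hV, Finset.prod_map_toList, Finset.prod_map_toList, one_mul]
    have hkey : ∀ j : {j : Fin n // j ∈ pᶜ},
        ((m - ν) j : ℤ) = (m j : ℤ) - (v (j : Fin n)).natAbs ∧ (v (j:Fin n)).natAbs ≤ m j := by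
      intro j
      have h1 := hνap j
      have h2 := (Finsupp.le_def.mp hle) j
      rw [Finsupp.tsub_apply]
      omega
    have hd : ∀ j, j ∈ pᶜ → dDeg n p Aplus m j = dDeg n p Aplus (m - ν) j + v j := by
      intro j hj
      obtain ⟨e1, e2⟩ := hkey ⟨j, hj⟩
      replace e1 : ((m - ν) ⟨j, hj⟩ : ℤ) = ((m ⟨j, hj⟩ : ℕ) : ℤ) - (v j).natAbs := e1
      replace e2 : (v j).natAbs ≤ m ⟨j, hj⟩ := e2
      rw [dDeg, dDeg, mExt, mExt, dif_pos hj, dif_pos hj]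
      by_cases hjA : j ∈ Aplus
      · rw [if_pos hjA, if_pos hjA]
        have := heff1 j hjA
        omega
      · have hjm : j ∈ Aminus := by
          have hjc' : j ∈ Aplus ∪ Aminus := by rw [hA]; exact hj
          rcases Finset.mem_union.mp hjc' with h' | h'
          · exact absurd h' hjA
          · exact h'
        rw [if_neg hjA, if_neg hjA]
        have := heff2 j hjm
        omega
    have hD : ∀ i, DDeg n p Aplus C m i = DDeg n p Aplus C (m - ν) i + v i := by
      intro i
      by_cases hi : i ∈ pᶜ
      · rw [DDeg, if_pos hi, DDeg, if_pos hi]; exact hd i hi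
      · rw [DDeg, if_neg hi, DDeg, if_neg hi, hrel i (by simpa using hi),
          ← Finset.sum_add_distrib]
        exact Finset.sum_congr rfl fun j hj => by rw [hd j hj]; ring
    have hVuni : ∀ μ : {j : Fin n // j ∈ pᶜ} →₀ ℕ, Vcoeff n p Aplus Aminus C μ
        = tVar n ^ (-(∑ i : Fin n, DDeg n p Aplus C μ i))
          * ∏ i : Fin n, braceF (qF n) (hbarF n) (-(tVar n * (hVar n)⁻¹))
              (xResF n Aplus Aminus C i) (DDeg n p Aplus C μ i) := by
      intro μ
      have hsum : ∑ i : Fin n, DDeg n p Aplus C μ i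
          = (∑ j ∈ pᶜ, dDeg n p Aplus μ j) + ∑ i ∈ p, DDeg n p Aplus C μ i := by
        rw [← Finset.sum_add_sum_compl p (DDeg n p Aplus C μ), add_comm]
        congr 1
        exact Finset.sum_congr rfl fun j hj => by rw [DDeg, if_pos hj]
      have hprod : (∏ i : Fin n, braceF (qF n) (hbarF n) (-(tVar n * (hVar n)⁻¹))
              (xResF n Aplus Aminus C i) (DDeg n p Aplus C μ i))
          = (∏ i ∈ p, braceF (qF n) (hbarF n) (-(tVar n * (hVar n)⁻¹))
              (xResF n Aplus Aminus C i) (DDeg n p Aplus C μ i))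
            * ((∏ j ∈ Aplus, braceF (qF n) (hbarF n) (-(tVar n * (hVar n)⁻¹)) 1
                (dDeg n p Aplus μ j))
              * ∏ j ∈ Aminus, braceF (qF n) (hbarF n) (-(tVar n * (hVar n)⁻¹)) ((hbarF n)⁻¹)
                (dDeg n p Aplus μ j)) := by
        rw [← Finset.prod_mul_prod_compl p]
        congr 1
        rw [← hA, Finset.prod_union hAdisj]
        congr 1
        · refine Finset.prod_congr rfl fun j hj => ?_
          rw [DDeg, if_pos (hApos hj), xResF, if_pos hj]
        · refine Finset.prod_congr rfl fun j hj => ?_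
          have hjn : j ∉ Aplus := fun hc => (Finset.disjoint_left.mp hAdisj hc) hj
          rw [DDeg, if_pos (hAneg hj), xResF, if_neg hjn, if_pos hj]
      rw [Vcoeff, hsum, hprod]
      ring
    have hbig : ∏ i : Fin n,
        ((if i ∈ Splus then
            1 - 1 * (xResF n Aplus Aminus C i * qF n ^ DDeg n p Aplus C m i)
          else if i ∈ Sminus then
            1 - hbarF n * (xResF n Aplus Aminus C i * qF n ^ DDeg n p Aplus C m i)
          else 1)
          * braceF (qF n) (hbarF n) (-(tVar n * (hVar n)⁻¹)) (xResF n Aplus Aminus C i)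
              (DDeg n p Aplus C m i))
        = ∏ i : Fin n,
        ((if i ∈ Splus then
            (tVar n * -(hVar n)⁻¹)
              * (1 - hbarF n * (xResF n Aplus Aminus C i * qF n ^ DDeg n p Aplus C (m - ν) i))
          else if i ∈ Sminus then
            (tVar n * -(hVar n)⁻¹)⁻¹
              * (1 - 1 * (xResF n Aplus Aminus C i * qF n ^ DDeg n p Aplus C (m - ν) i))
          else 1)
          * braceF (qF n) (hbarF n) (-(tVar n * (hVar n)⁻¹)) (xResF n Aplus Aminus C i)
              (DDeg n p Aplus C (m - ν) i)) := by
      refine Finset.prod_congr rfl fun i _ => ?_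
      by_cases hiP : i ∈ Splus
      · rw [if_pos hiP, if_pos hiP, hD i, hv1 i hiP]
        by_cases hic : i ∈ pᶜ
        · have hiA : i ∈ Aplus := hvplus i hiP hic
          have hx1 : xResF n Aplus Aminus C i = 1 := by rw [xResF, if_pos hiA]
          have hDpos : 0 ≤ DDeg n p Aplus C (m - ν) i := by
            rw [DDeg, if_pos hic, dDeg, if_pos hiA]
            exact Int.natCast_nonneg _
          exact step_plus n (xResF n Aplus Aminus C i) (DDeg n p Aplus C (m - ν) i)
            (by rw [hx1]; exact ns1 n i (DDeg n p Aplus C (m - ν) i + 1) (by omega))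
            (fun hc => absurd hDpos (by omega))
        · have hnp : i ∉ Aplus := fun hc => hic (hApos hc)
          have hnm : i ∉ Aminus := fun hc => hic (hAneg hc)
          have hx : xResF n Aplus Aminus C i
              = aVar n i * hVar n ^ (-2 * ∑ j ∈ Aminus, C i j) := by
            rw [xResF, if_neg hnp, if_neg hnm]
          exact step_plus n (xResF n Aplus Aminus C i) (DDeg n p Aplus C (m - ν) i)
            (by rw [hx]; exact ns3 n i _ _)
            (fun _ => by rw [hx]; exact ns4 n i _ _)
      · by_cases hiM : i ∈ Sminus
        · rw [if_neg hiP, if_neg hiP, if_pos hiM, if_pos hiM, hD i, hv2 i hiM,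
            ← sub_eq_add_neg]
          by_cases hic : i ∈ pᶜ
          · have hiA : i ∈ Aminus := hvminus i hiM hic
            have hnp : i ∉ Aplus := fun hc => (Finset.disjoint_left.mp hAdisj hc) hiA
            have hx : xResF n Aplus Aminus C i = (hbarF n)⁻¹ := by
              rw [xResF, if_neg hnp, if_pos hiA]
            have hDneg : DDeg n p Aplus C (m - ν) i ≤ 0 := by
              rw [DDeg, if_pos hic, dDeg, if_neg hnp]
              exact neg_nonpos.mpr (Int.natCast_nonneg _)
            exact step_minus n (xResF n Aplus Aminus C i) (DDeg n p Aplus C (m - ν) i)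
              (by rw [hx]; exact ns2 n i _)
              (fun _ => by rw [hx]; exact ns5 n i (DDeg n p Aplus C (m - ν) i - 1) (by omega))
          · have hnp : i ∉ Aplus := fun hc => hic (hApos hc)
            have hnm : i ∉ Aminus := fun hc => hic (hAneg hc)
            have hx : xResF n Aplus Aminus C i
                = aVar n i * hVar n ^ (-2 * ∑ j ∈ Aminus, C i j) := by
              rw [xResF, if_neg hnp, if_neg hnm]
            exact step_minus n (xResF n Aplus Aminus C i) (DDeg n p Aplus C (m - ν) i)
              (by rw [hx]; exact ns3 n i _ _)
              (fun _ => by rw [hx]; exact ns4 n i _ _)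
        · rw [if_neg hiP, if_neg hiP, if_neg hiM, if_neg hiM, hD i,
            hv0 i (Finset.notMem_union.mpr ⟨hiP, hiM⟩), add_zero]
    rw [Finset.prod_mul_distrib, Finset.prod_mul_distrib] at hbig
    have hPL : (∏ i : Fin n, (if i ∈ Splus then
            1 - 1 * (xResF n Aplus Aminus C i * qF n ^ DDeg n p Aplus C m i)
          else if i ∈ Sminus then
            1 - hbarF n * (xResF n Aplus Aminus C i * qF n ^ DDeg n p Aplus C m i)
          else 1))
        = (∏ i ∈ Splus, (1 - 1 * (xResF n Aplus Aminus C i * qF n ^ DDeg n p Aplus C m i)))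
          * ∏ i ∈ Sminus,
            (1 - hbarF n * (xResF n Aplus Aminus C i * qF n ^ DDeg n p Aplus C m i)) := by
      rw [← Finset.prod_subset (Finset.subset_univ (Splus ∪ Sminus))
        (fun i _ hi => by
          rw [if_neg (fun hc => hi (Finset.mem_union_left _ hc)),
            if_neg (fun hc => hi (Finset.mem_union_right _ hc))]),
        Finset.prod_union hS]
      congr 1
      · exact Finset.prod_congr rfl fun i hi => by rw [if_pos hi]
      · exact Finset.prod_congr rfl fun i hi => by
          rw [if_neg (Finset.disjoint_right.mp hS hi), if_pos hi]
    have hPR : (∏ i : Fin n, (if i ∈ Splus then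
            (tVar n * -(hVar n)⁻¹)
              * (1 - hbarF n * (xResF n Aplus Aminus C i * qF n ^ DDeg n p Aplus C (m - ν) i))
          else if i ∈ Sminus then
            (tVar n * -(hVar n)⁻¹)⁻¹
              * (1 - 1 * (xResF n Aplus Aminus C i * qF n ^ DDeg n p Aplus C (m - ν) i))
          else 1))
        = ((tVar n * -(hVar n)⁻¹) ^ Splus.card
            * ∏ i ∈ Splus, (1 - hbarF n
                * (xResF n Aplus Aminus C i * qF n ^ DDeg n p Aplus C (m - ν) i)))
          * (((tVar n * -(hVar n)⁻¹)⁻¹) ^ Sminus.card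
            * ∏ i ∈ Sminus, (1 - 1
                * (xResF n Aplus Aminus C i * qF n ^ DDeg n p Aplus C (m - ν) i))) := by
      rw [← Finset.prod_subset (Finset.subset_univ (Splus ∪ Sminus))
        (fun i _ hi => by
          rw [if_neg (fun hc => hi (Finset.mem_union_left _ hc)),
            if_neg (fun hc => hi (Finset.mem_union_right _ hc))]),
        Finset.prod_union hS]
      congr 1
      · rw [← Finset.prod_const, ← Finset.prod_mul_distrib]
        exact Finset.prod_congr rfl fun i hi => by rw [if_pos hi]
      · rw [← Finset.prod_const, ← Finset.prod_mul_distrib]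
        exact Finset.prod_congr rfl fun i hi => by
          rw [if_neg (Finset.disjoint_right.mp hS hi), if_pos hi]
    rw [hPL, hPR] at hbig
    have hsumv : ∑ i : Fin n, v i = (Splus.card : ℤ) - (Sminus.card : ℤ) := by
      rw [← Finset.sum_subset (Finset.subset_univ (Splus ∪ Sminus))
        (fun i _ hi => hv0 i hi), Finset.sum_union hS,
        Finset.sum_congr rfl hv1, Finset.sum_congr rfl hv2]
      simp [mul_comm]
      omega
    have hsumD : ∑ i : Fin n, DDeg n p Aplus C m i
        = (∑ i : Fin n, DDeg n p Aplus C (m - ν) i)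
          + ((Splus.card : ℤ) - (Sminus.card : ℤ)) := by
      rw [Finset.sum_congr rfl (fun i _ => hD i), Finset.sum_add_distrib, hsumv]
    rw [hVuni m, hVuni (m - ν), hsumD]
    have hsc := scalar_id (tVar n) (hVar n) ht hh Splus.card Sminus.card
      (∑ i : Fin n, DDeg n p Aplus C (m - ν) i)
    linear_combination
      (tVar n ^ (-((∑ i : Fin n, DDeg n p Aplus C (m - ν) i)
          + ((Splus.card : ℤ) - (Sminus.card : ℤ))))) * hbig
      + ((∏ i ∈ Splus, (1 - hbarF n
            * (xResF n Aplus Aminus C i * qF n ^ DDeg n p Aplus C (m - ν) i)))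
          * (∏ i ∈ Sminus, (1 - 1
            * (xResF n Aplus Aminus C i * qF n ^ DDeg n p Aplus C (m - ν) i)))
          * ∏ i : Fin n, braceF (qF n) (hbarF n) (-(tVar n * (hVar n)⁻¹))
              (xResF n Aplus Aminus C i) (DDeg n p Aplus C (m - ν) i)) * hsc
  · -- degenerate case: some coordinate of `m` is too small, LHS vanishes
    rw [if_neg hle, mul_zero]
    rw [Finsupp.le_def] at hle
    push_neg at hle
    obtain ⟨j, hj⟩ := hle
    rw [hνap j] at hj
    have hvne : v (j : Fin n) ≠ 0 := by omega
    have hmj : m j = 0 := by rcases hv3 (j : Fin n) with h | h | h <;> omega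
    have hjS : (j : Fin n) ∈ Splus ∪ Sminus := by
      by_contra hc; exact hvne (hv0 _ hc)
    have hD0 : DDeg n p Aplus C m (j : Fin n) = 0 := by
      rw [DDeg, if_pos j.2, dDeg, mExt, dif_pos j.2]
      have hmm : m ⟨(j : Fin n), j.2⟩ = 0 := by rwa [Subtype.coe_eta]
      rw [hmm]
      split <;> simp
    rcases Finset.mem_union.mp hjS with hjP | hjM
    · have hiA : (j : Fin n) ∈ Aplus := hvplus _ hjP j.2
      have hx1 : xResF n Aplus Aminus C (j : Fin n) = 1 := by rw [xResF, if_pos hiA]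
      have hzero : (1:FF n) - 1 * (xResF n Aplus Aminus C (j : Fin n)
          * qF n ^ DDeg n p Aplus C m (j : Fin n)) = 0 := by
        rw [hx1, hD0, zpow_zero]; ring
      rw [Finset.prod_eq_zero hjP hzero, zero_mul]
    · have hiA : (j : Fin n) ∈ Aminus := hvminus _ hjM j.2
      have hnp : (j : Fin n) ∉ Aplus := fun hc => (Finset.disjoint_left.mp hAdisj hc) hiA
      have hx1 : xResF n Aplus Aminus C (j : Fin n) = (hbarF n)⁻¹ := by
        rw [xResF, if_neg hnp, if_pos hiA]
      have hzero : (1:FF n) - hbarF n * (xResF n Aplus Aminus C (j : Fin n)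
          * qF n ^ DDeg n p Aplus C m (j : Fin n)) = 0 := by
        rw [hx1, hD0, zpow_zero, mul_one, mul_inv_cancel₀ hbne, sub_self]
      rw [Finset.prod_eq_zero hjM hzero, zero_mul, mul_zero]

end
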